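/- arXiv:2312.04562 — 3 statements merged into one kernel-verified Lean document; each statement's English description precedes it below -/
import Mathlib

section
/- In the iterated Baumslag-Solitar group BS⁽²⁾ = ⟨a, b, c | a b = b a², b c = c b²⟩, for every natural number n the element v(n) := (c⁻ⁿ b⁻¹ cⁿ) a (c⁻ⁿ b cⁿ) equals a^(2^(2ⁿ)). -/
/-- The defining relations of the iterated Baumslag-Solitar group
BS⁽²⁾ = ⟨a, b, c | a b = b a², b c = c b²⟩, with generators indexed by `Fin 3`
(0 ↦ a, 1 ↦ b, 2 ↦ c). -/
def BS2Rels : Set (FreeGroup (Fin 3)) :=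
  {FreeGroup.of 0 * FreeGroup.of 1 *
      (FreeGroup.of 1 * FreeGroup.of 0 * FreeGroup.of 0)⁻¹,
   FreeGroup.of 1 * FreeGroup.of 2 *
      (FreeGroup.of 2 * FreeGroup.of 1 * FreeGroup.of 1)⁻¹}

/-- The iterated Baumslag-Solitar group BS⁽²⁾. -/
abbrev BS2 := PresentedGroup BS2Rels

private lemma conj_pow_two {G : Type*} [Group G] {x y : G} (h : y⁻¹ * x * y = x ^ 2) :
    ∀ m : ℕ, (y⁻¹) ^ m * x * y ^ m = x ^ (2 ^ m)
  | 0 => by simp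
  | (m + 1) => by
    have key : (y⁻¹) ^ (m + 1) * x * y ^ (m + 1)
        = (y⁻¹) ^ m * (y⁻¹ * x * y) * y ^ m := by
      rw [pow_succ, pow_succ']; group
    rw [key, h]
    have : (y⁻¹) ^ m * x ^ 2 * y ^ m = ((y⁻¹) ^ m * x * y ^ m) ^ 2 := by
      rw [pow_two x, pow_two ((y⁻¹) ^ m * x * y ^ m)]; group
    rw [this, conj_pow_two h m, ← pow_mul, ← pow_succ]

private lemma bs2_rel (r : FreeGroup (Fin 3)) (hr : r ∈ BS2Rels) :
    (QuotientGroup.mk r : BS2) = 1 :=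
  (QuotientGroup.eq_one_iff r).mpr (Subgroup.subset_normalClosure hr)

theorem bs2_doubly_exponential (n : ℕ) :
    (((PresentedGroup.of 2 : BS2)⁻¹) ^ n * (PresentedGroup.of 1 : BS2)⁻¹ *
        (PresentedGroup.of 2 : BS2) ^ n) *
      (PresentedGroup.of 0 : BS2) *
      (((PresentedGroup.of 2 : BS2)⁻¹) ^ n * (PresentedGroup.of 1 : BS2) *
        (PresentedGroup.of 2 : BS2) ^ n)
      = (PresentedGroup.of 0 : BS2) ^ (2 ^ (2 ^ n)) := by
  set a : BS2 := PresentedGroup.of 0 with ha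
  set b : BS2 := PresentedGroup.of 1 with hb
  set c : BS2 := PresentedGroup.of 2 with hc
  have h1 : a * b * (b * a * a)⁻¹ = 1 := by
    have := PresentedGroup.one_of_mem (rels := BS2Rels) (Set.mem_insert _ _)
    simpa [ha, hb, PresentedGroup.of, QuotientGroup.mk_mul, QuotientGroup.mk_inv] using this
  have h2 : b * c * (c * b * b)⁻¹ = 1 := by
    have := PresentedGroup.one_of_mem (rels := BS2Rels) (Set.mem_insert_of_mem _ rfl)
    simpa [hb, hc, PresentedGroup.of, QuotientGroup.mk_mul, QuotientGroup.mk_inv] using this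
  have hab : b⁻¹ * a * b = a ^ 2 := by
    have : a * b = b * a * a := by
      rw [← mul_inv_eq_one]; exact h1
    rw [pow_two]
    calc b⁻¹ * a * b = b⁻¹ * (a * b) := by group
    _ = b⁻¹ * (b * a * a) := by rw [this]
    _ = a * a := by group
  have hbc : c⁻¹ * b * c = b ^ 2 := by
    have : b * c = c * b * b := by
      rw [← mul_inv_eq_one]; exact h2
    rw [pow_two]
    calc c⁻¹ * b * c = c⁻¹ * (b * c) := by group
    _ = c⁻¹ * (c * b * b) := by rw [this]
    _ = b * b := by group
  have hB : (c⁻¹) ^ n * b * c ^ n = b ^ (2 ^ n) := conj_pow_two hbc n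
  have hBinv : (c⁻¹) ^ n * b⁻¹ * c ^ n = ((c⁻¹) ^ n * b * c ^ n)⁻¹ := by group
  rw [hBinv, hB, ← inv_pow]
  exact conj_pow_two hab (2 ^ n)
end

section
/- The submonoid of GL(2, ℚ) generated by the two matrices B = [[1/2,0],[0,1]] and C = [[1/2,1],[0,1]] is free: distinct finite words in B and C yield distinct matrices. Consequently the number of distinct elements of BS(1,2) representable by words of length at most 2L in the generators is at least 2^L. -/
/-- The defining relation of the Baumslag-Solitar group BS(1,2) = ⟨a, b | a b = b a²⟩. -/
def BSRels : Set (FreeGroup Bool) :=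
  {FreeGroup.of true * FreeGroup.of false *
    (FreeGroup.of false * FreeGroup.of true * FreeGroup.of true)⁻¹}

/-- The Baumslag-Solitar group BS(1,2). -/
abbrev BS12 := PresentedGroup BSRels

/-- `a` generator of BS(1,2). -/
noncomputable def bsa : BS12 := PresentedGroup.of true
/-- `b` generator of BS(1,2). -/
noncomputable def bsb : BS12 := PresentedGroup.of false

/-- The two matrices B = [[1/2,0],[0,1]] and C = [[1/2,1],[0,1]], images of `b` and `a·b`. -/
noncomputable def BCmat : Bool → Matrix (Fin 2) (Fin 2) ℚ :=
  fun x => if x then !![(1:ℚ)/2, 0; 0, 1] else !![(1:ℚ)/2, 1; 0, 1]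

/-- Top-right entry of the product matrix of a word. -/
def qf : List Bool → ℚ
  | [] => 0
  | x :: w => qf w / 2 + (if x then 0 else 1)

lemma qf_bound (w : List Bool) : 0 ≤ qf w ∧ qf w < 2 := by
  induction w with
  | nil => simp [qf]
  | cons x w ih => cases x <;> simp [qf] <;> constructor <;> linarith [ih.1, ih.2]

lemma prodForm (w : List Bool) :
    (w.map BCmat).prod = !![(1/2:ℚ)^w.length, qf w; 0, 1] := by
  induction w with
  | nil => simp [qf, Matrix.one_fin_two]
  | cons x w ih =>
    cases x <;>
    simp [BCmat, qf, ih, Matrix.mul_fin_two, pow_succ] <;> ring_nf <;> simp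

lemma half_pow_inj {n m : ℕ} (h : (1/2:ℚ)^n = (1/2)^m) : n = m := by
  have h2 : (2:ℚ)^n = 2^m := by
    have := congrArg (·⁻¹) h
    simpa [inv_pow] using this
  have : (2:ℕ)^n = 2^m := by exact_mod_cast h2
  exact Nat.pow_right_injective (by norm_num) this

lemma words_inj : ∀ w w' : List Bool,
    (w.map BCmat).prod = (w'.map BCmat).prod → w = w' := by
  intro w
  induction w with
  | nil =>
    intro w' h
    rw [prodForm, prodForm] at h
    have h00 : (1/2:ℚ)^(0:ℕ) = (1/2)^w'.length := congrFun (congrFun h 0) 0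
    have := half_pow_inj h00
    exact (List.eq_nil_of_length_eq_zero this.symm).symm
  | cons x w ih =>
    intro w' h
    cases w' with
    | nil =>
      rw [prodForm, prodForm] at h
      have h00 : (1/2:ℚ)^(x::w).length = (1/2)^(0:ℕ) := congrFun (congrFun h 0) 0
      exact absurd (half_pow_inj h00) (by simp)
    | cons y w' =>
      rw [prodForm, prodForm] at h
      have h00 : (1/2:ℚ)^(x::w).length = (1/2)^(y::w').length := congrFun (congrFun h 0) 0
      have h01 : qf (x::w) = qf (y::w') := congrFun (congrFun h 0) 1
      have hlen : w.length = w'.length := by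
        have := half_pow_inj h00; simpa using this
      have hb := qf_bound w
      have hb' := qf_bound w'
      have hxy : x = y := by
        cases x <;> cases y <;> simp [qf] at h01 ⊢ <;> linarith [hb.1, hb.2, hb'.1, hb'.2]
      subst hxy
      have hq : qf w = qf w' := by
        cases x <;> simp [qf] at h01 <;> linarith
      have : (w.map BCmat).prod = (w'.map BCmat).prod := by
        rw [prodForm, prodForm, hlen, hq]
      rw [ih w' this]

/-- The image of `a` in GL(2,ℚ). -/
noncomputable def Au : GL (Fin 2) ℚ :=
  ⟨!![1,1;0,1], !![1,-1;0,1], by rw [Matrix.one_fin_two]; norm_num [Matrix.mul_fin_two],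
    by rw [Matrix.one_fin_two]; norm_num [Matrix.mul_fin_two]⟩

/-- The image of `b` in GL(2,ℚ). -/
noncomputable def Bu : GL (Fin 2) ℚ :=
  ⟨!![1/2,0;0,1], !![2,0;0,1], by rw [Matrix.one_fin_two]; norm_num [Matrix.mul_fin_two],
    by rw [Matrix.one_fin_two]; norm_num [Matrix.mul_fin_two]⟩

/-- The representation of BS(1,2) in GL(2,ℚ). -/
noncomputable def φ : BS12 →* GL (Fin 2) ℚ :=
  PresentedGroup.toGroup (f := fun x => if x then Au else Bu)
    (by
      intro r hr
      rcases hr with rfl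
      simp only [map_mul, map_inv, FreeGroup.lift_apply_of, if_true, if_false]
      rw [mul_inv_eq_one]
      ext : 1
      simp [Au, Bu, Units.val_mul, Matrix.mul_fin_two]
      norm_num)

/-- The representation of BS(1,2), valued in the matrix monoid. -/
noncomputable def ψ : BS12 →* Matrix (Fin 2) (Fin 2) ℚ :=
  (Units.coeHom _).comp φ

/-- The generators of the free submonoid: `b` and `a·b`. -/
noncomputable def gen (x : Bool) : BS12 := if x then bsb else bsa * bsb

lemma ψ_gen (x : Bool) : ψ (gen x) = BCmat x := by
  cases x <;>
    simp [ψ, gen, φ, bsa, bsb, PresentedGroup.toGroup.of, BCmat, Au, Bu,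
      Units.val_mul, Matrix.mul_fin_two]

lemma ψ_word (w : List Bool) : ψ ((w.map gen).prod) = (w.map BCmat).prod := by
  rw [map_list_prod, List.map_map]
  congr 1
  exact List.map_congr_left fun x _ => ψ_gen x

lemma f_inj : Function.Injective (fun v : List Bool => ((v.map gen)).prod) := by
  intro v v' h
  apply words_inj
  rw [← ψ_word, ← ψ_word]
  simp only at h
  rw [h]

theorem bs12_free_submonoid_and_growth :
    (∀ w w' : List Bool, (w.map BCmat).prod = (w'.map BCmat).prod → w = w') ∧
    (∀ L : ℕ, 2 ^ L ≤
      Nat.card {g : BS12 | ∃ l : List BS12,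
        (∀ x ∈ l, x ∈ ({bsa, bsa⁻¹, bsb, bsb⁻¹} : Set BS12)) ∧
        l.length ≤ 2 * L ∧ l.prod = g}) := by
  refine ⟨words_inj, fun L => ?_⟩
  set S : Set BS12 := {bsa, bsa⁻¹, bsb, bsb⁻¹} with hS
  set T : Set BS12 := {g : BS12 | ∃ l : List BS12,
      (∀ x ∈ l, x ∈ S) ∧ l.length ≤ 2 * L ∧ l.prod = g} with hT
  have hSfin : S.Finite := (((Set.finite_singleton _).insert _).insert _).insert _
  haveI := hSfin.to_subtype
  have hTfin : T.Finite := by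
    have : T ⊆ (fun l : List ↥S => (l.map Subtype.val).prod) ''
        {l : List ↥S | l.length ≤ 2 * L} := by
      rintro g ⟨l, hmem, hlen, rfl⟩
      refine ⟨l.attach.map (fun x => ⟨x.1, hmem x.1 x.2⟩), by simpa using hlen, ?_⟩
      simp [List.map_map]
    exact (List.finite_length_le _ _).image _ |>.subset this
  haveI : Finite ↥T := hTfin.to_subtype
  have memT : ∀ v : Fin L → Bool, ((List.ofFn v).map gen).prod ∈ T := by
    intro v
    refine ⟨((List.ofFn v).map (fun x => if x then [bsb] else [bsa, bsb])).flatten,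
      ?_, ?_, ?_⟩
    · intro x hx
      simp only [List.mem_flatten, List.mem_map] at hx
      obtain ⟨_, ⟨y, _, rfl⟩, hx⟩ := hx
      cases y <;> simp_all [hS] <;> tauto
    · rw [List.length_flatten, List.map_map]
      calc (List.map (List.length ∘ fun x => if x then [bsb] else [bsa, bsb])
              (List.ofFn v)).sum
          ≤ (List.map (List.length ∘ fun x => if x then [bsb] else [bsa, bsb])
              (List.ofFn v)).length • 2 := by
            apply List.sum_le_card_nsmul
            intro x hx
            simp only [List.mem_map] at hx
            obtain ⟨y, _, rfl⟩ := hx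
            cases y <;> simp
        _ ≤ 2 * L := by simp [mul_comm]
    · rw [List.prod_flatten, List.map_map]
      congr 1
      apply List.map_congr_left
      intro x _
      cases x <;> simp [gen]
  have Finj : Function.Injective (fun v : Fin L → Bool =>
      (⟨((List.ofFn v).map gen).prod, memT v⟩ : ↥T)) := by
    intro v v' h
    have := f_inj (congrArg Subtype.val h)
    exact funext fun i => by
      have := congrArg (fun l => l[(i:ℕ)]?) this
      simpa [List.getElem?_ofFn] using this
  calc 2 ^ L = Nat.card (Fin L → Bool) := by simp [Nat.card_eq_fintype_card]
    _ ≤ Nat.card ↥T := Nat.card_le_card_of_injective _ Finj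
end

section
/- Let H be a self-adjoint operator on a finite-dimensional Hilbert space and let |w⟩, |w'⟩ be unit vectors with ⟨w'| H^k |w⟩ = 0 for all 0 ≤ k < d. Then for all t ≥ 0, |⟨w'| exp(-i t H) |w⟩| ≤ (t ‖H‖)^d / d! · exp(t ‖H‖), where ‖H‖ is the operator norm. -/
theorem matrix_element_exp_bound {n : ℕ}
    (H : EuclideanSpace ℂ (Fin n) →L[ℂ] EuclideanSpace ℂ (Fin n))
    (hH : IsSelfAdjoint H)
    (w w' : EuclideanSpace ℂ (Fin n)) (hw : ‖w‖ = 1) (hw' : ‖w'‖ = 1)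
    (d : ℕ) (hmat : ∀ k < d, (inner ℂ w' ((H ^ k) w) : ℂ) = 0)
    (t : ℝ) (ht : 0 ≤ t) :
    ‖(inner ℂ w' ((NormedSpace.exp ((-(Complex.I * (t : ℂ))) • H)) w) : ℂ)‖ ≤
      (t * ‖H‖) ^ d / (Nat.factorial d : ℝ) * Real.exp (t * ‖H‖) := by
  set c : ℂ := -(Complex.I * (t : ℂ)) with hc
  set A := c • H with hAdef
  set x := t * ‖H‖ with hxdef
  have hx0 : 0 ≤ x := mul_nonneg ht (norm_nonneg _)
  have hnc : ‖c‖ = t := by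
    simp [hc, abs_of_nonneg ht]
  have hnA : ‖A‖ = x := by
    have := norm_smul c H
    rw [hAdef, this, hnc]
  have hsum : Summable (fun k : ℕ => ((k.factorial : ℂ))⁻¹ • A ^ k) :=
    NormedSpace.expSeries_summable' A
  set g : ℕ → ℂ := fun k => ((k.factorial : ℂ))⁻¹ * inner ℂ w' ((A ^ k) w) with hg
  have h1 : Summable (fun k : ℕ => (((k.factorial : ℂ))⁻¹ • A ^ k) w) :=
    hsum.map (ContinuousLinearMap.apply ℂ (EuclideanSpace ℂ (Fin n)) w)
      (ContinuousLinearMap.apply ℂ (EuclideanSpace ℂ (Fin n)) w).continuous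
  have hgsum : Summable g := by
    have h2 := h1.map (innerSL ℂ w') (innerSL ℂ w').continuous
    exact h2.congr (fun k => by
      simp only [hg, Function.comp_apply, innerSL_apply_apply, ContinuousLinearMap.smul_apply,
        inner_smul_right])
  have hexpA : NormedSpace.exp A = ∑' k : ℕ, ((k.factorial : ℂ))⁻¹ • A ^ k := by
    rw [NormedSpace.exp_eq_tsum ℂ]
  have e1 : (∑' k : ℕ, ((k.factorial : ℂ))⁻¹ • A ^ k) w
      = ∑' k : ℕ, (((k.factorial : ℂ))⁻¹ • A ^ k) w :=
    ContinuousLinearMap.map_tsum (ContinuousLinearMap.apply ℂ (EuclideanSpace ℂ (Fin n)) w) hsum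
  have e2 : (inner ℂ w' (∑' k : ℕ, (((k.factorial : ℂ))⁻¹ • A ^ k) w) : ℂ)
      = ∑' k : ℕ, (inner ℂ w' ((((k.factorial : ℂ))⁻¹ • A ^ k) w) : ℂ) :=
    ContinuousLinearMap.map_tsum (innerSL ℂ w') h1
  have happ : (inner ℂ w' ((NormedSpace.exp A) w) : ℂ) = ∑' k, g k := by
    rw [hexpA, e1, e2]
    exact tsum_congr (fun k => by
      simp only [hg, ContinuousLinearMap.smul_apply, inner_smul_right])
  -- vanishing of first d terms
  have hg0 : ∀ k < d, g k = 0 := by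
    intro k hk
    have hAk : A ^ k = c ^ k • H ^ k := smul_pow c H k
    simp only [hg, hAk, ContinuousLinearMap.smul_apply, inner_smul_right, hmat k hk,
      mul_zero]
  -- term bound
  have hbound : ∀ k, ‖g k‖ ≤ x ^ k / (k.factorial : ℝ) := by
    intro k
    have h3' : ‖A ^ k‖ ≤ x ^ k := by
      rcases Nat.eq_zero_or_pos k with hk | hk
      · subst hk
        rw [pow_zero, pow_zero]
        calc ‖(1 : EuclideanSpace ℂ (Fin n) →L[ℂ] EuclideanSpace ℂ (Fin n))‖
            = ‖ContinuousLinearMap.id ℂ (EuclideanSpace ℂ (Fin n))‖ := by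
              rw [ContinuousLinearMap.one_def]
          _ ≤ 1 := ContinuousLinearMap.norm_id_le
      · calc ‖A ^ k‖ ≤ ‖A‖ ^ k := norm_pow_le' _ hk
          _ = x ^ k := by rw [hnA]
    have h1' : ‖(inner ℂ w' ((A ^ k) w) : ℂ)‖ ≤ x ^ k := by
      calc ‖(inner ℂ w' ((A ^ k) w) : ℂ)‖ ≤ ‖w'‖ * ‖(A ^ k) w‖ := norm_inner_le_norm _ _
        _ ≤ ‖w'‖ * (‖A ^ k‖ * ‖w‖) := by
            gcongr; exact (A ^ k).le_opNorm w
        _ = ‖A ^ k‖ := by rw [hw, hw']; ring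
        _ ≤ x ^ k := h3'
    rw [hg, norm_mul]
    have hn : ‖((k.factorial : ℂ))⁻¹‖ = ((k.factorial : ℝ))⁻¹ := by
      rw [norm_inv]; simp
    rw [hn, div_eq_inv_mul]
    gcongr
  -- comparison term
  have hcomp : ∀ i : ℕ, x ^ (i + d) / ((i + d).factorial : ℝ)
      ≤ x ^ d / (d.factorial : ℝ) * (x ^ i / (i.factorial : ℝ)) := by
    intro i
    have hfac : (d.factorial * i.factorial : ℝ) ≤ ((i + d).factorial : ℝ) := by
      have : d.factorial * i.factorial ∣ (i + d).factorial := by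
        rw [mul_comm]
        exact Nat.factorial_mul_factorial_dvd_factorial_add i d
      exact_mod_cast Nat.le_of_dvd (Nat.factorial_pos _) this
    have hpos : (0 : ℝ) < d.factorial * i.factorial := by positivity
    calc x ^ (i + d) / ((i + d).factorial : ℝ)
        ≤ x ^ (i + d) / ((d.factorial * i.factorial : ℝ)) := by
          apply div_le_div_of_nonneg_left (by positivity) hpos hfac
      _ = x ^ d / (d.factorial : ℝ) * (x ^ i / (i.factorial : ℝ)) := by
          rw [add_comm i d, pow_add]
          field_simp
  have hsum2 : Summable (fun i : ℕ => x ^ d / (d.factorial : ℝ) * (x ^ i / (i.factorial : ℝ))) :=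
    (Real.summable_pow_div_factorial x).mul_left _
  have hnorm : Summable (fun i : ℕ => ‖g (i + d)‖) :=
    hsum2.of_nonneg_of_le (fun i => norm_nonneg _)
      (fun i => (hbound (i + d)).trans (hcomp i))
  have htg : ∑' k, g k = ∑' i : ℕ, g (i + d) := by
    rw [← Summable.sum_add_tsum_nat_add d hgsum]
    rw [Finset.sum_eq_zero (fun i hi => hg0 i (Finset.mem_range.mp hi)), zero_add]
  rw [happ, htg]
  calc ‖∑' i : ℕ, g (i + d)‖ ≤ ∑' i : ℕ, ‖g (i + d)‖ := norm_tsum_le_tsum_norm hnorm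
    _ ≤ ∑' i : ℕ, x ^ d / (d.factorial : ℝ) * (x ^ i / (i.factorial : ℝ)) :=
        Summable.tsum_le_tsum (fun i => (hbound (i + d)).trans (hcomp i)) hnorm hsum2
    _ = x ^ d / (d.factorial : ℝ) * ∑' i : ℕ, x ^ i / (i.factorial : ℝ) := tsum_mul_left
    _ = x ^ d / (d.factorial : ℝ) * Real.exp x := by
        rw [Real.exp_eq_exp_ℝ, NormedSpace.exp_eq_tsum_div]
end
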